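/- Let A be a finite left brace. Then the Wedderburn radical of A, i.e. the sum of all ideals of A that are both left nilpotent and right nilpotent, is a left nilpotent ideal of A. -/

import Mathlib

/-- A left brace: `(A,+)` abelian group, `(A,∘)` a group, with
`a ∘ (b + c) + a = a ∘ b + a ∘ c`. -/
structure LeftBrace (A : Type) [AddCommGroup A] where
  circ : A → A → A
  one : A
  inv : A → A
  circ_assoc : ∀ a b c, circ (circ a b) c = circ a (circ b c)
  one_circ : ∀ a, circ one a = a
  circ_one : ∀ a, circ a one = a
  inv_circ : ∀ a, circ (inv a) a = one
  circ_add : ∀ a b c, circ a (b + c) + a = circ a b + circ a c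

namespace LeftBrace

variable {A : Type} [AddCommGroup A]

/-- `a * b = a ∘ b - a - b`. -/
def star (B : LeftBrace A) (a b : A) : A := B.circ a b - a - b

/-- `lchain B n = Aⁿ` for `n ≥ 1` (and `lchain B 0 = ⊤`): `A¹ = A`, and
`Aⁿ⁺¹` is the additive subgroup generated by `{a * b : a ∈ A, b ∈ Aⁿ}`. -/
def lchain (B : LeftBrace A) : ℕ → AddSubgroup A
  | 0 => ⊤
  | 1 => ⊤
  | n + 2 => AddSubgroup.closure {x | ∃ a : A, ∃ b ∈ B.lchain (n + 1), x = B.star a b}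

/-- `rchain B n = A⁽ⁿ⁾` for `n ≥ 1`: `A⁽¹⁾ = A`, and `A⁽ⁿ⁺¹⁾` is the additive
subgroup generated by `{a * b : a ∈ A⁽ⁿ⁾, b ∈ A}`. -/
def rchain (B : LeftBrace A) : ℕ → AddSubgroup A
  | 0 => ⊤
  | 1 => ⊤
  | n + 2 => AddSubgroup.closure {x | ∃ a ∈ B.rchain (n + 1), ∃ b : A, x = B.star a b}

/-- `schain B n = A^[n]` for `n ≥ 1`:  `A^[1] = A`, and
`A^[i+1] = Σ_{j=1}^{i} A^[j] * A^[i+1-j]` (additive subgroup generated by the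
corresponding products). -/
def schain (B : LeftBrace A) : ℕ → AddSubgroup A
  | 0 => ⊤
  | 1 => ⊤
  | n + 2 => AddSubgroup.closure
      {x | ∃ j : Fin (n + 1), ∃ u ∈ B.schain (j.1 + 1), ∃ v ∈ B.schain (n + 1 - j.1),
        x = B.star u v}

/-- An ideal of a left brace: an additive subgroup, normal in `(A,∘)`, and
invariant under all maps `λ_a(x) = a * x + x`. -/
structure IsIdeal (B : LeftBrace A) (I : AddSubgroup A) : Prop where
  lam_mem : ∀ a : A, ∀ x ∈ I, B.star a x + x ∈ I
  conj_mem : ∀ a : A, ∀ x ∈ I, B.circ (B.circ a x) (B.inv a) ∈ I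

/-- Left chain of an ideal: `ichainL B I n = Iⁿ⁺¹`, where `I¹ = I` and `Iⁱ⁺¹`
is the additive subgroup generated by `{a * b : a ∈ I, b ∈ Iⁱ}`. -/
def ichainL (B : LeftBrace A) (I : AddSubgroup A) : ℕ → AddSubgroup A
  | 0 => I
  | n + 1 => AddSubgroup.closure {x | ∃ a ∈ I, ∃ b ∈ B.ichainL I n, x = B.star a b}

/-- Right chain of an ideal: `ichainR B I n = I⁽ⁿ⁺¹⁾`, where `I⁽¹⁾ = I` and
`I⁽ⁱ⁺¹⁾` is the additive subgroup generated by `{a * b : a ∈ I⁽ⁱ⁾, b ∈ I}`. -/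
def ichainR (B : LeftBrace A) (I : AddSubgroup A) : ℕ → AddSubgroup A
  | 0 => I
  | n + 1 => AddSubgroup.closure {x | ∃ a ∈ B.ichainR I n, ∃ b ∈ I, x = B.star a b}

end LeftBrace




namespace LeftBrace

variable {A : Type} [AddCommGroup A] (B : LeftBrace A)



theorem circ_inv (a : A) : B.circ a (B.inv a) = B.one := by
  have h1 : B.circ (B.inv (B.inv a)) (B.circ (B.inv a) (B.circ a (B.inv a)))
      = B.circ a (B.inv a) := by
    rw [← B.circ_assoc, ← B.circ_assoc, B.inv_circ, B.one_circ]
  calc B.circ a (B.inv a)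
      = B.circ (B.inv (B.inv a)) (B.circ (B.inv a) (B.circ a (B.inv a))) := h1.symm
    _ = B.circ (B.inv (B.inv a)) (B.circ (B.circ (B.inv a) a) (B.inv a)) := by
        rw [B.circ_assoc]
    _ = B.one := by rw [B.inv_circ, B.one_circ, B.inv_circ]

theorem circ_zero (a : A) : B.circ a 0 = a := by
  have h := B.circ_add a 0 0
  have h2 : B.circ a 0 + a = B.circ a 0 + B.circ a 0 := by simpa using h
  exact (add_left_cancel h2).symm

theorem one_eq_zero : B.one = (0 : A) := by
  have h := B.circ_zero B.one
  rw [B.one_circ] at h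
  exact h.symm

theorem zero_circ (a : A) : B.circ 0 a = a := by
  have := B.one_circ a; rwa [B.one_eq_zero] at this

theorem inv_circ' (a : A) : B.circ (B.inv a) a = 0 := by
  rw [B.inv_circ, B.one_eq_zero]

theorem circ_inv' (a : A) : B.circ a (B.inv a) = 0 := by
  rw [B.circ_inv, B.one_eq_zero]

theorem inv_circ_cancel (a x : A) : B.circ (B.inv a) (B.circ a x) = x := by
  rw [← B.circ_assoc, B.inv_circ', B.zero_circ]

theorem circ_inv_cancel (a x : A) : B.circ a (B.circ (B.inv a) x) = x := by
  rw [← B.circ_assoc, B.circ_inv', B.zero_circ]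

theorem circ_left_cancel {a x y : A} (h : B.circ a x = B.circ a y) : x = y := by
  have := congrArg (fun z => B.circ (B.inv a) z) h
  simpa [B.inv_circ_cancel] using this

theorem inv_inv (a : A) : B.inv (B.inv a) = a := by
  apply B.circ_left_cancel (a := B.inv a)
  rw [B.circ_inv', B.inv_circ']

theorem inv_circ_rev (a b : A) : B.inv (B.circ a b) = B.circ (B.inv b) (B.inv a) := by
  apply B.circ_left_cancel (a := B.circ a b)
  rw [B.circ_inv']
  rw [B.circ_assoc, ← B.circ_assoc b, B.circ_inv', B.zero_circ, B.circ_inv']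

/-! ### The lambda maps -/

def lam (a x : A) : A := B.circ a x - a

theorem lam_def (a x : A) : B.lam a x = B.circ a x - a := rfl

theorem circ_eq (a x : A) : B.circ a x = a + B.lam a x := by
  rw [lam_def]; abel

theorem lam_add (a x y : A) : B.lam a (x + y) = B.lam a x + B.lam a y := by
  have h : B.circ a (x + y) = B.circ a x + B.circ a y - a :=
    eq_sub_of_add_eq (B.circ_add a x y)
  simp only [lam_def, h]; abel

theorem lam_zero (a : A) : B.lam a 0 = 0 := by
  simp [lam_def, B.circ_zero]

def lamHom (a : A) : A →+ A := AddMonoidHom.mk' (B.lam a) (B.lam_add a)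

theorem lam_neg (a x : A) : B.lam a (-x) = -B.lam a x :=
  (B.lamHom a).map_neg x

theorem lam_sub (a x y : A) : B.lam a (x - y) = B.lam a x - B.lam a y :=
  (B.lamHom a).map_sub x y

theorem lam_lam (a b x : A) : B.lam a (B.lam b x) = B.lam (B.circ a b) x := by
  rw [show B.lam b x = B.circ b x - b from rfl, B.lam_sub]
  simp only [lam_def, ← B.circ_assoc]
  abel


theorem lam_one (x : A) : B.lam 0 x = x := by
  simp [lam_def, B.zero_circ]

theorem lam_inv_lam (a x : A) : B.lam (B.inv a) (B.lam a x) = x := by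
  rw [B.lam_lam, B.inv_circ', B.lam_one]

theorem lam_lam_inv (a x : A) : B.lam a (B.lam (B.inv a) x) = x := by
  rw [B.lam_lam, B.circ_inv', B.lam_one]

theorem lam_inv_self (a : A) : B.lam a (B.inv a) = -a := by
  rw [lam_def, B.circ_inv']; abel

/-! ### star identities -/

theorem star_eq (a x : A) : B.star a x = B.lam a x - x := by
  simp only [star, lam_def]

theorem star_add_lam (a x : A) : B.star a x + x = B.lam a x := by
  rw [star_eq]; abel

theorem star_zero (a : A) : B.star a 0 = 0 := by
  simp [star_eq, B.lam_zero]

theorem star_add_right (a x y : A) : B.star a (x + y) = B.star a x + B.star a y := by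
  simp only [star_eq, B.lam_add]; abel

def starHom (a : A) : A →+ A := AddMonoidHom.mk' (B.star a) (B.star_add_right a)

theorem inv_eq_lam (a : A) : B.inv a = B.lam (B.inv a) (-a) := by
  have h : B.lam a (B.inv a) = -a := B.lam_inv_self a
  rw [← h, B.lam_inv_lam]

/-- `(a∘b)*c = a*(b*c) + a*c + b*c`. -/
theorem star_circ_left (a b c : A) :
    B.star (B.circ a b) c = B.star a (B.star b c) + B.star a c + B.star b c := by
  simp only [star_eq, B.lam_sub, B.lam_lam]
  abel

/-- conjugation formula: `(a∘x)∘a⁻¹ = λ_a(x) + λ_a(x*a⁻¹)`. -/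
theorem conj_eq (a x : A) :
    B.circ (B.circ a x) (B.inv a) = B.lam a x + B.lam a (B.star x (B.inv a)) := by
  have l1 : ∀ u v : A, B.circ u v = B.lam u v + u := fun u v => by rw [lam_def]; abel
  rw [l1 (B.circ a x) (B.inv a), ← B.lam_lam a x, l1 a x, star_eq, B.lam_sub,
    B.lam_inv_self]
  abel

/-- the swap identity:
`b*(a*c) = a*(b*c) + s*(λ_{a∘b} c)` with `s = (b∘a)∘(a∘b)⁻¹`. -/
theorem star_swap (a b c : A) :
    B.star b (B.star a c) = B.star a (B.star b c)
      + B.star (B.circ (B.circ b a) (B.inv (B.circ a b))) (B.lam (B.circ a b) c) := by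
  have hs : B.circ (B.circ (B.circ b a) (B.inv (B.circ a b))) (B.circ a b) = B.circ b a := by
    rw [B.circ_assoc, B.inv_circ', B.circ_zero]
  simp only [star_eq, B.lam_sub, B.lam_lam, hs]
  abel


/-- identity ★ : `λ_c(x*y) = ((c∘x)∘c⁻¹) * λ_c(y)`. -/
theorem lam_star (c x y : A) :
    B.lam c (B.star x y) = B.star (B.circ (B.circ c x) (B.inv c)) (B.lam c y) := by
  have h : B.circ (B.circ (B.circ c x) (B.inv c)) c = B.circ c x := by
    rw [B.circ_assoc, B.inv_circ', B.circ_zero]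
  simp only [star_eq, B.lam_sub, B.lam_lam, h]

theorem star_neg_right (a x : A) : B.star a (-x) = -B.star a x :=
  (B.starHom a).map_neg x

/-! ### subgroup star -/

def sstar (X Y : AddSubgroup A) : AddSubgroup A :=
  AddSubgroup.closure {x | ∃ a ∈ X, ∃ b ∈ Y, x = B.star a b}

theorem star_mem_sstar {X Y : AddSubgroup A} {a b : A} (ha : a ∈ X) (hb : b ∈ Y) :
    B.star a b ∈ B.sstar X Y :=
  AddSubgroup.subset_closure ⟨a, ha, b, hb, rfl⟩

theorem sstar_le {X Y K : AddSubgroup A}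
    (h : ∀ a ∈ X, ∀ b ∈ Y, B.star a b ∈ K) : B.sstar X Y ≤ K := by
  rw [sstar, AddSubgroup.closure_le]
  rintro x ⟨a, ha, b, hb, rfl⟩
  exact h a ha b hb

theorem sstar_mono {X X' Y Y' : AddSubgroup A} (hX : X ≤ X') (hY : Y ≤ Y') :
    B.sstar X Y ≤ B.sstar X' Y' :=
  B.sstar_le fun a ha b hb => B.star_mem_sstar (hX ha) (hY hb)

/-- to prove `a * y ∈ K` for all `y` in a subgroup, generators suffice. -/
theorem star_right_closure {a : A} {S : Set A} {K : AddSubgroup A}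
    (h : ∀ s ∈ S, B.star a s ∈ K) : ∀ y ∈ AddSubgroup.closure S, B.star a y ∈ K := by
  intro y hy
  induction hy using AddSubgroup.closure_induction with
  | mem s hs => exact h s hs
  | zero => rw [B.star_zero]; exact K.zero_mem
  | add x y _ _ hx hy => rw [B.star_add_right]; exact K.add_mem hx hy
  | neg x _ hx => rw [B.star_neg_right]; exact K.neg_mem hx

theorem sstar_bot (X : AddSubgroup A) : B.sstar X ⊥ ≤ ⊥ := by
  apply B.sstar_le
  intro a _ b hb
  rw [AddSubgroup.mem_bot] at hb
  rw [hb, B.star_zero]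
  exact AddSubgroup.mem_bot.2 rfl

theorem sstar_sup_right (X Y Z : AddSubgroup A) :
    B.sstar X (Y ⊔ Z) ≤ B.sstar X Y ⊔ B.sstar X Z := by
  apply B.sstar_le
  intro a ha b hb
  rcases AddSubgroup.mem_sup.1 hb with ⟨y, hy, z, hz, rfl⟩
  rw [B.star_add_right]
  exact AddSubgroup.add_mem _ (AddSubgroup.mem_sup_left (B.star_mem_sstar ha hy))
    (AddSubgroup.mem_sup_right (B.star_mem_sstar ha hz))

/-! ### ideal lemmas -/

def LamStable (Z : AddSubgroup A) : Prop := ∀ a : A, ∀ z ∈ Z, B.lam a z ∈ Z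

variable {B}

theorem LamStable.star_mem {Z : AddSubgroup A} (hZ : B.LamStable Z) (a : A) {z : A}
    (hz : z ∈ Z) : B.star a z ∈ Z := by
  rw [B.star_eq]; exact Z.sub_mem (hZ a z hz) hz

theorem LamStable.pre_mem {Z : AddSubgroup A} (hZ : B.LamStable Z) {a z : A}
    (hz : B.lam a z ∈ Z) : z ∈ Z := by
  have := hZ (B.inv a) _ hz
  rwa [B.lam_inv_lam] at this

variable (B)

namespace IsIdeal

variable {B} {I : AddSubgroup A} (hI : B.IsIdeal I)

theorem lam_mem' (hI : B.IsIdeal I) (a : A) {x : A} (hx : x ∈ I) : B.lam a x ∈ I := by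
  rw [← B.star_add_lam]; exact hI.lam_mem a x hx

theorem lamStable (hI : B.IsIdeal I) : B.LamStable I := fun a z hz => hI.lam_mem' a hz

theorem inv_mem (hI : B.IsIdeal I) {x : A} (hx : x ∈ I) : B.inv x ∈ I := by
  rw [B.inv_eq_lam]
  exact hI.lam_mem' _ (I.neg_mem hx)

theorem circ_mem (hI : B.IsIdeal I) {x y : A} (hx : x ∈ I) (hy : y ∈ I) :
    B.circ x y ∈ I := by
  rw [B.circ_eq]
  exact I.add_mem hx (hI.lam_mem' _ hy)

theorem star_right_mem (hI : B.IsIdeal I) {x : A} (hx : x ∈ I) (b : A) :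
    B.star x b ∈ I := by
  have hc := hI.conj_mem (B.inv b) x hx
  rw [B.conj_eq, B.inv_inv] at hc
  have h2 : B.lam (B.inv b) (B.star x b) ∈ I := by
    have h3 := I.sub_mem hc (hI.lam_mem' (B.inv b) hx)
    simpa using h3
  exact hI.lamStable.pre_mem h2

/-- the `∘`-commutator-type element `(b∘a)∘(a∘b)⁻¹` lies in any ideal containing `b`. -/
theorem comm_mem_left (hI : B.IsIdeal I) {b : A} (hb : b ∈ I) (a : A) :
    B.circ (B.circ b a) (B.inv (B.circ a b)) ∈ I := by
  rw [B.inv_circ_rev, ← B.circ_assoc, B.circ_assoc b a, B.circ_assoc b]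
  exact hI.circ_mem hb (hI.conj_mem a _ (hI.inv_mem hb))

/-- the `∘`-commutator-type element `(b∘a)∘(a∘b)⁻¹` lies in any ideal containing `a`. -/
theorem comm_mem_right (hI : B.IsIdeal I) {a : A} (ha : a ∈ I) (b : A) :
    B.circ (B.circ b a) (B.inv (B.circ a b)) ∈ I := by
  rw [B.inv_circ_rev, ← B.circ_assoc (B.circ b a)]
  exact hI.circ_mem (hI.conj_mem b a ha) (hI.inv_mem ha)

end IsIdeal

theorem lamStable_sstar {X Z : AddSubgroup A} (hX : B.IsIdeal X) (hZ : B.LamStable Z) :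
    B.LamStable (B.sstar X Z) := by
  intro c z hz
  induction hz using AddSubgroup.closure_induction with
  | mem s hs =>
      obtain ⟨a, ha, b, hb, rfl⟩ := hs
      rw [B.lam_star]
      exact B.star_mem_sstar (hX.conj_mem c a ha) (hZ c b hb)
  | zero => rw [B.lam_zero]; exact (B.sstar X Z).zero_mem
  | add x y _ _ hx hy => rw [B.lam_add]; exact (B.sstar X Z).add_mem hx hy
  | neg x _ hx => rw [B.lam_neg]; exact (B.sstar X Z).neg_mem hx



theorem ichainL_succ (I : AddSubgroup A) (n : ℕ) :
    B.ichainL I (n + 1) = B.sstar I (B.ichainL I n) := rfl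

theorem ichainL_antitone {I : AddSubgroup A} (hI : B.IsIdeal I) :
    ∀ n, B.ichainL I (n + 1) ≤ B.ichainL I n := by
  intro n
  induction n with
  | zero =>
      rw [ichainL_succ]
      exact B.sstar_le fun a ha b hb => hI.lamStable.star_mem a hb
  | succ n ih =>
      rw [ichainL_succ, ichainL_succ]
      exact B.sstar_mono le_rfl ih

theorem ichainL_le {I : AddSubgroup A} (hI : B.IsIdeal I) {q n : ℕ} (h : q ≤ n) :
    B.ichainL I n ≤ B.ichainL I q := by
  induction n with
  | zero => rw [Nat.le_zero.1 h]
  | succ n ih =>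
      rcases Nat.lt_or_ge q (n+1) with h' | h'
      · exact le_trans (B.ichainL_antitone hI n) (ih (by omega))
      · rw [Nat.le_antisymm h h']

/-! ### words -/

def wordVal (B : LeftBrace A) (X Y : AddSubgroup A) : List Bool → AddSubgroup A
  | [] => ⊥
  | [l] => cond l X Y
  | l :: x :: xs => B.sstar (cond l X Y) (wordVal B X Y (x :: xs))

theorem wordVal_cons (X Y : AddSubgroup A) (l : Bool) {w : List Bool} (hw : w ≠ []) :
    B.wordVal X Y (l :: w) = B.sstar (cond l X Y) (B.wordVal X Y w) := by
  cases w with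
  | nil => exact absurd rfl hw
  | cons x xs => rfl

theorem wordVal_lamStable {X Y : AddSubgroup A} (hX : B.IsIdeal X) (hY : B.IsIdeal Y) :
    ∀ w : List Bool, B.LamStable (B.wordVal X Y w) := by
  intro w
  induction w with
  | nil =>
      intro a z hz
      have hz' : z = 0 := hz
      rw [hz', B.lam_zero]
      exact AddSubgroup.zero_mem _
  | cons l t ih =>
      cases t with
      | nil =>
          cases l
          · exact hY.lamStable
          · exact hX.lamStable
      | cons x xs =>
          have hco : B.IsIdeal (cond l X Y) := by cases l <;> [exact hY; exact hX]
          exact B.lamStable_sstar hco ih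

theorem wordVal_map_not (X Y : AddSubgroup A) :
    ∀ w : List Bool, B.wordVal X Y (w.map (! ·)) = B.wordVal Y X w := by
  intro w
  induction w with
  | nil => rfl
  | cons l t ih =>
      cases t with
      | nil => cases l <;> rfl
      | cons x xs =>
          rw [List.map_cons, B.wordVal_cons _ _ _ (by simp),
            B.wordVal_cons _ _ _ (by simp), ih]
          cases l <;> rfl

theorem wordVal_rep_false (X Y : AddSubgroup A) :
    ∀ n, B.wordVal X Y (List.replicate (n + 1) false) = B.ichainL Y n := by
  intro n
  induction n with
  | zero => rfl
  | succ n ih =>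
      rw [List.replicate_succ, B.wordVal_cons _ _ _ (by simp), ih, ichainL_succ]
      rfl

theorem wordVal_rep_true_le {X Y : AddSubgroup A} {w : List Bool} (hw : w ≠ [])
    (hbot : B.wordVal X Y w ≤ ⊥) :
    ∀ a, B.wordVal X Y (List.replicate a true ++ w) ≤ ⊥ := by
  intro a
  induction a with
  | zero => simpa using hbot
  | succ a ih =>
      rw [List.replicate_succ, List.cons_append,
        B.wordVal_cons _ _ _ (by simp [hw]), show ((⊥ : AddSubgroup A) = B.wordVal X Y []) from rfl]
      calc B.sstar X (B.wordVal X Y (List.replicate a true ++ w))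
          ≤ B.sstar X ⊥ := B.sstar_mono le_rfl (by simpa using ih)
        _ ≤ ⊥ := B.sstar_bot X

/-- pairwise swap: `Y ⋆ X ≤ X ⊓ Y`. -/
theorem sstar_pair_swap {X Y : AddSubgroup A} (hX : B.IsIdeal X) (hY : B.IsIdeal Y) :
    B.sstar Y X ≤ X ⊓ Y := by
  apply B.sstar_le
  intro b hb a ha
  exact ⟨hX.lamStable.star_mem b ha, hY.star_right_mem hb a⟩

/-- triple swap: `Y ⋆ (X ⋆ Z) ≤ X ⋆ (Y ⋆ Z) ⊔ (X ⊓ Y) ⋆ Z` for `Z` λ-stable. -/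
theorem sstar_swap {X Y Z : AddSubgroup A} (hX : B.IsIdeal X) (hY : B.IsIdeal Y)
    (hZ : B.LamStable Z) :
    B.sstar Y (B.sstar X Z) ≤ B.sstar X (B.sstar Y Z) ⊔ B.sstar (X ⊓ Y) Z := by
  apply B.sstar_le
  intro b hb y hy
  set K := B.sstar X (B.sstar Y Z) ⊔ B.sstar (X ⊓ Y) Z with hK
  induction hy using AddSubgroup.closure_induction with
  | mem s hs =>
      obtain ⟨a, ha, c, hc, rfl⟩ := hs
      rw [B.star_swap a b c]
      apply K.add_mem
      · exact AddSubgroup.mem_sup_left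
          (B.star_mem_sstar ha (B.star_mem_sstar hb hc))
      · refine AddSubgroup.mem_sup_right (B.star_mem_sstar ⟨?_, ?_⟩ (hZ _ c hc))
        · exact hX.comm_mem_right ha b
        · exact hY.comm_mem_left hb a
  | zero => rw [B.star_zero]; exact K.zero_mem
  | add u v _ _ hu hv => rw [B.star_add_right]; exact K.add_mem hu hv
  | neg u _ hu => rw [B.star_neg_right]; exact K.neg_mem hu


/-! ### inversion counting and sorting -/

def invCount : List Bool → ℕ
  | [] => 0
  | true :: t => invCount t
  | false :: t => invCount t + t.count true

theorem invCount_cons_true (t : List Bool) : invCount (true :: t) = invCount t := rfl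

theorem invCount_cons_false (t : List Bool) :
    invCount (false :: t) = invCount t + t.count true := rfl

theorem count_swap_true (u t : List Bool) :
    (u ++ false :: true :: t).count true = (u ++ true :: false :: t).count true := by
  simp [List.count_append, List.count_cons]

theorem invCount_swap (u t : List Bool) :
    invCount (u ++ false :: true :: t) = invCount (u ++ true :: false :: t) + 1 := by
  induction u with
  | nil =>
      simp only [List.nil_append, invCount_cons_false, invCount_cons_true,
        List.count_cons]
      simp
      omega
  | cons l u ih =>
      cases l
      · simp only [List.cons_append, invCount_cons_false, ih, count_swap_true]
        omega
      · simp only [List.cons_append, invCount_cons_true, ih]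

theorem sorted_or_split (w : List Bool) :
    (∃ a b, w = List.replicate a true ++ List.replicate b false) ∨
      (∃ u t, w = u ++ false :: true :: t) := by
  induction w with
  | nil => exact Or.inl ⟨0, 0, rfl⟩
  | cons l t ih =>
      rcases ih with ⟨a, b, rfl⟩ | ⟨u, t', rfl⟩
      · cases l
        · rcases a with _ | a
          · exact Or.inl ⟨0, b + 1, by simp [List.replicate_succ]⟩
          · exact Or.inr ⟨[], List.replicate a true ++ List.replicate b false, by
              simp [List.replicate_succ]⟩
        · exact Or.inl ⟨a + 1, b, by simp [List.replicate_succ]⟩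
      · exact Or.inr ⟨l :: u, t', rfl⟩


theorem wordVal_swap_ctx {X Y : AddSubgroup A} (hX : B.IsIdeal X) (hY : B.IsIdeal Y) :
    ∀ u t : List Bool, B.wordVal X Y (u ++ false :: true :: t) ≤
      B.wordVal X Y (u ++ true :: false :: t) ⊔ B.wordVal X Y (u ++ false :: t) := by
  intro u
  induction u with
  | nil =>
      intro t
      cases t with
      | nil =>
          simp only [List.nil_append]
          have h1 : B.wordVal X Y [false, true] = B.sstar Y X := rfl
          have h2 : B.wordVal X Y [false] = Y := rfl
          rw [h1, h2]
          exact le_trans (B.sstar_pair_swap hX hY) (le_trans inf_le_right le_sup_right)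
      | cons x xs =>
          simp only [List.nil_append]
          rw [B.wordVal_cons X Y false (w := true :: x :: xs) (by simp),
            B.wordVal_cons X Y true (w := x :: xs) (by simp),
            B.wordVal_cons X Y true (w := false :: x :: xs) (by simp),
            B.wordVal_cons X Y false (w := x :: xs) (by simp)]
          simp only [Bool.cond_true, Bool.cond_false]
          have hs := B.sstar_swap (Z := B.wordVal X Y (x :: xs)) hX hY
            (B.wordVal_lamStable hX hY _)
          refine le_trans hs (sup_le_sup ?_ ?_)
          · exact le_rfl
          · exact B.sstar_mono inf_le_right le_rfl
  | cons l u ih =>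
      intro t
      simp only [List.cons_append]
      rw [B.wordVal_cons _ _ _ (by simp), B.wordVal_cons _ _ _ (by simp),
        B.wordVal_cons _ _ _ (by simp)]
      calc B.sstar (cond l X Y) (B.wordVal X Y (u ++ false :: true :: t))
          ≤ B.sstar (cond l X Y) (B.wordVal X Y (u ++ true :: false :: t)
              ⊔ B.wordVal X Y (u ++ false :: t)) := B.sstar_mono le_rfl (ih t)
        _ ≤ _ := B.sstar_sup_right _ _ _

theorem kill_sorted {X Y : AddSubgroup A} (hY : B.IsIdeal Y) {q : ℕ}
    (hq : B.ichainL Y q = ⊥) {a b : ℕ} (hb : q < b) :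
    B.wordVal X Y (List.replicate a true ++ List.replicate b false) ≤ ⊥ := by
  obtain ⟨b', rfl⟩ : ∃ b'', b = b'' + 1 := ⟨b - 1, by omega⟩
  apply B.wordVal_rep_true_le (by simp)
  rw [B.wordVal_rep_false]
  rw [← hq]
  exact B.ichainL_le hY (by omega)

theorem count_true_false (w : List Bool) : w.count true + w.count false = w.length := by
  induction w with
  | nil => rfl
  | cons l t ih => cases l <;> simp [List.count_cons] <;> omega

theorem word_kill {X Y : AddSubgroup A} (hX : B.IsIdeal X) (hY : B.IsIdeal Y) {q : ℕ}
    (hq : B.ichainL Y q = ⊥) :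
    ∀ r m (w : List Bool), w.count true ≤ r → invCount w ≤ m → q < w.count false →
      B.wordVal X Y w ≤ ⊥ := by
  intro r
  induction r with
  | zero =>
      intro m w h1 h2 h3
      rcases sorted_or_split w with ⟨a, b, rfl⟩ | ⟨u, t, rfl⟩
      · refine B.kill_sorted hY hq (lt_of_lt_of_le h3 ?_)
        simp [List.count_append, List.count_replicate]
      · exfalso
        have : 0 < (u ++ false :: true :: t).count true := by
          simp [List.count_append, List.count_cons]
        omega
  | succ r ihr =>
      intro m
      induction m with
      | zero =>
          intro w h1 h2 h3
          rcases sorted_or_split w with ⟨a, b, rfl⟩ | ⟨u, t, rfl⟩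
          · refine B.kill_sorted hY hq (lt_of_lt_of_le h3 ?_)
            simp [List.count_append, List.count_replicate]
          · exfalso
            have := invCount_swap u t
            omega
      | succ m ihm =>
          intro w h1 h2 h3
          rcases sorted_or_split w with ⟨a, b, rfl⟩ | ⟨u, t, rfl⟩
          · refine B.kill_sorted hY hq (lt_of_lt_of_le h3 ?_)
            simp [List.count_append, List.count_replicate]
          · have hsw := B.wordVal_swap_ctx hX hY u t
            have hw1 : B.wordVal X Y (u ++ true :: false :: t) ≤ ⊥ := by
              apply ihm
              · rw [← count_swap_true u t]; exact h1
              · have := invCount_swap u t; omega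
              · have : (u ++ true :: false :: t).count false
                    = (u ++ false :: true :: t).count false := by
                  simp [List.count_append, List.count_cons]
                omega
            have hw2 : B.wordVal X Y (u ++ false :: t) ≤ ⊥ := by
              apply ihr (invCount (u ++ false :: t))
              · have : (u ++ false :: true :: t).count true
                    = (u ++ false :: t).count true + 1 := by
                  simp [List.count_append, List.count_cons] <;> omega
                omega
              · exact le_rfl
              · have : (u ++ false :: true :: t).count false
                    = (u ++ false :: t).count false := by
                  simp [List.count_append, List.count_cons] <;> omega
                omega
            exact le_trans hsw (sup_le hw1 hw2)

theorem count_map_not (w : List Bool) :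
    (w.map (! ·)).count true = w.count false ∧
      (w.map (! ·)).count false = w.count true := by
  induction w with
  | nil => exact ⟨rfl, rfl⟩
  | cons l t ih =>
      obtain ⟨ih1, ih2⟩ := ih
      cases l <;> simp [List.count_cons] <;> omega

theorem word_kill_all {X Y : AddSubgroup A} (hX : B.IsIdeal X) (hY : B.IsIdeal Y)
    {p q : ℕ} (hp : B.ichainL X p = ⊥) (hq : B.ichainL Y q = ⊥) :
    ∀ w : List Bool, p + q + 2 ≤ w.length → B.wordVal X Y w ≤ ⊥ := by
  intro w hw
  have hc := count_true_false w
  rcases Nat.lt_or_ge q (w.count false) with h | h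
  · exact B.word_kill hX hY hq (w.count true) (invCount w) w le_rfl le_rfl h
  · have hp' : p < w.count true := by omega
    rw [← B.wordVal_map_not Y X w]
    obtain ⟨h1, h2⟩ := count_map_not w
    exact B.word_kill hY hX hp ((w.map (! ·)).count true) (invCount (w.map (! ·)))
      (w.map (! ·)) le_rfl le_rfl (by omega)


/-! ### the word filtration -/

def gch (B : LeftBrace A) (X Y : AddSubgroup A) (n : ℕ) : AddSubgroup A :=
  AddSubgroup.closure {x | ∃ w : List Bool, n + 1 ≤ w.length ∧ x ∈ B.wordVal X Y w}

theorem wordVal_le_gch {X Y : AddSubgroup A} {n : ℕ} {w : List Bool}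
    (hw : n + 1 ≤ w.length) : B.wordVal X Y w ≤ B.gch X Y n :=
  fun x hx => AddSubgroup.subset_closure ⟨w, hw, hx⟩

theorem sup_decomp {X Y : AddSubgroup A} (hY : B.IsIdeal Y) {a : A} (ha : a ∈ X ⊔ Y) :
    ∃ x ∈ X, ∃ y ∈ Y, a = B.circ x y := by
  rcases AddSubgroup.mem_sup.1 ha with ⟨x, hx, y, hy, rfl⟩
  refine ⟨x, hx, B.lam (B.inv x) y, hY.lam_mem' _ hy, ?_⟩
  rw [B.circ_eq, B.lam_lam_inv]

theorem ichainL_sup_le_gch {X Y : AddSubgroup A} (hX : B.IsIdeal X) (hY : B.IsIdeal Y) :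
    ∀ n, B.ichainL (X ⊔ Y) n ≤ B.gch X Y n := by
  intro n
  induction n with
  | zero =>
      refine sup_le ?_ ?_
      · exact le_trans (le_of_eq rfl) (B.wordVal_le_gch (w := [true]) (by simp))
      · exact le_trans (le_of_eq rfl) (B.wordVal_le_gch (w := [false]) (by simp))
  | succ n ih =>
      rw [ichainL_succ]
      refine le_trans (B.sstar_mono le_rfl ih) (B.sstar_le ?_)
      intro a ha z hz
      refine B.star_right_closure ?_ z hz
      rintro s ⟨w, hw, hs⟩
      have hwne : w ≠ [] := by cases w <;> simp_all
      obtain ⟨x, hx, y, hy, rfl⟩ := B.sup_decomp hY ha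
      rw [B.star_circ_left]
      have m1 : B.star y s ∈ B.wordVal X Y (false :: w) := by
        rw [B.wordVal_cons X Y false hwne]
        exact B.star_mem_sstar hy hs
      have m2 : B.star x s ∈ B.wordVal X Y (true :: w) := by
        rw [B.wordVal_cons X Y true hwne]
        exact B.star_mem_sstar hx hs
      have m3 : B.star x (B.star y s) ∈ B.wordVal X Y (true :: false :: w) := by
        rw [B.wordVal_cons X Y true (by simp)]
        exact B.star_mem_sstar hx (by simpa using m1)
      refine AddSubgroup.add_mem _ (AddSubgroup.add_mem _ ?_ ?_) ?_
      · exact B.wordVal_le_gch (by simp; omega) m3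
      · exact B.wordVal_le_gch (by simp; omega) m2
      · exact B.wordVal_le_gch (by simp; omega) m1

/-- the key pair lemma : the sum of two left nilpotent ideals is left nilpotent. -/
theorem sup_left_nilpotent {X Y : AddSubgroup A} (hX : B.IsIdeal X) (hY : B.IsIdeal Y)
    {p q : ℕ} (hp : B.ichainL X p = ⊥) (hq : B.ichainL Y q = ⊥) :
    B.ichainL (X ⊔ Y) (p + q + 1) = ⊥ := by
  refine le_bot_iff.1 (le_trans (B.ichainL_sup_le_gch hX hY _) ?_)
  rw [gch, AddSubgroup.closure_le]
  rintro z ⟨w, hw, hz⟩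
  exact B.word_kill_all hX hY hp hq w (by omega) hz

theorem sup_star_right_mem {X Y : AddSubgroup A} (hX : B.IsIdeal X) (hY : B.IsIdeal Y)
    {a : A} (ha : a ∈ X ⊔ Y) (b : A) : B.star a b ∈ X ⊔ Y := by
  obtain ⟨x, hx, y, hy, rfl⟩ := B.sup_decomp hY ha
  rw [B.star_circ_left]
  refine AddSubgroup.add_mem _ (AddSubgroup.add_mem _ ?_ ?_) ?_
  · exact AddSubgroup.mem_sup_right (hY.lamStable.star_mem x (hY.star_right_mem hy b))
  · exact AddSubgroup.mem_sup_left (hX.star_right_mem hx b)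
  · exact AddSubgroup.mem_sup_right (hY.star_right_mem hy b)

theorem sup_lamStable {X Y : AddSubgroup A} (hX : B.IsIdeal X) (hY : B.IsIdeal Y) :
    B.LamStable (X ⊔ Y) := by
  intro a z hz
  rcases AddSubgroup.mem_sup.1 hz with ⟨x, hx, y, hy, rfl⟩
  rw [B.lam_add]
  exact AddSubgroup.add_mem _ (AddSubgroup.mem_sup_left (hX.lam_mem' a hx))
    (AddSubgroup.mem_sup_right (hY.lam_mem' a hy))

theorem sup_isIdeal {X Y : AddSubgroup A} (hX : B.IsIdeal X) (hY : B.IsIdeal Y) :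
    B.IsIdeal (X ⊔ Y) := by
  constructor
  · intro a x hx
    rw [B.star_add_lam]
    exact B.sup_lamStable hX hY a x hx
  · intro a x hx
    rw [B.conj_eq]
    exact AddSubgroup.add_mem _ (B.sup_lamStable hX hY a x hx)
      (B.sup_lamStable hX hY a _ (B.sup_star_right_mem hX hY hx (B.inv a)))

theorem bot_isIdeal : B.IsIdeal (⊥ : AddSubgroup A) := by
  constructor
  · intro a x hx
    have hx' : x = 0 := hx
    subst hx'
    simp [B.star_zero]
  · intro a x hx
    have hx' : x = 0 := hx
    subst hx'
    rw [B.circ_zero, B.circ_inv']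
    exact AddSubgroup.mem_bot.2 rfl


theorem sSup_ideal_nilpotent {S : Set (AddSubgroup A)} (hfin : S.Finite)
    (hS : ∀ K ∈ S, B.IsIdeal K ∧ ∃ n, B.ichainL K n = ⊥) :
    B.IsIdeal (sSup S) ∧ ∃ n, B.ichainL (sSup S) n = ⊥ := by
  refine Set.Finite.induction_on
    (motive := fun s _ => (∀ K ∈ s, B.IsIdeal K ∧ ∃ n, B.ichainL K n = ⊥) →
      B.IsIdeal (sSup s) ∧ ∃ n, B.ichainL (sSup s) n = ⊥) S hfin ?_ ?_ hS
  · intro _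
    rw [sSup_empty]
    exact ⟨B.bot_isIdeal, 0, rfl⟩
  · intro K s _ _ ih h
    obtain ⟨hK, p, hp⟩ := h K (Set.mem_insert K s)
    obtain ⟨hs, q, hq⟩ := ih fun L hL => h L (Set.mem_insert_of_mem K hL)
    rw [sSup_insert]
    exact ⟨B.sup_isIdeal hK hs, p + q + 1, B.sup_left_nilpotent hK hs hp hq⟩

end LeftBrace

/-- in a finite left brace, the Wedderburn radical (the sum of
all ideals that are both left nilpotent and right nilpotent) is a left
nilpotent ideal. -/
theorem finite_brace_wedderburnRadical_leftNilpotent {A : Type} [AddCommGroup A]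
    [Finite A] (B : LeftBrace A) :
    B.IsIdeal (sSup {I : AddSubgroup A |
        B.IsIdeal I ∧ (∃ n : ℕ, B.ichainL I n = ⊥) ∧ ∃ n : ℕ, B.ichainR I n = ⊥}) ∧
    ∃ n : ℕ,
      B.ichainL (sSup {I : AddSubgroup A |
        B.IsIdeal I ∧ (∃ n : ℕ, B.ichainL I n = ⊥) ∧ ∃ n : ℕ, B.ichainR I n = ⊥}) n = ⊥ := by

  have hfinsub : Finite (AddSubgroup A) :=
    Finite.of_injective (fun (K : AddSubgroup A) => (K : Set A)) SetLike.coe_injective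
  refine B.sSup_ideal_nilpotent (Set.toFinite _) ?_
  rintro K ⟨hK, ⟨n, hn⟩, -⟩
  exact ⟨hK, n, hn⟩
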